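/- Let G be a finite p-group of order p^n with n ≥ 2 having dense CD-subgroups. Then the center Z(G) has order p and the maximal Chermak–Delgado measure m*(G) equals p^{n+1}. -/

import Mathlib

open Pointwise

/-- Chermak–Delgado measure of a subgroup. -/
noncomputable def mCD (G : Type*) [Group G] (H : Subgroup G) : ℕ :=
  Nat.card H * Nat.card (Subgroup.centralizer (H : Set G))

/-- Maximal Chermak–Delgado measure. -/
noncomputable def mStar (G : Type*) [Group G] : ℕ :=
  sSup (Set.range (mCD G))

/-- Chermak–Delgado lattice (as a set of subgroups). -/
def CD (G : Type*) [Group G] : Set (Subgroup G) :=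
  {H | mCD G H = mStar G}

/-- A group has dense CD-subgroups if for all subgroups H < K with H not
maximal in K, there exists X in CD(G) with H < X < K. -/
def DenseCD (G : Type*) [Group G] : Prop :=
  ∀ H K : Subgroup G, H < K → (∃ L : Subgroup G, H < L ∧ L < K) →
    ∃ X ∈ CD G, H < X ∧ X < K

lemma sub_eq_of_le_of_card_le {G : Type*} [Group G] [Finite G] {X K : Subgroup G}
    (h : X ≤ K) (hc : Nat.card K ≤ Nat.card X) : X = K := by
  have : (X : Set G) = (K : Set G) := by
    apply Set.eq_of_subset_of_ncard_le h _ (Set.toFinite _)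
    rwa [← Nat.card_coe_set_eq, ← Nat.card_coe_set_eq]
  exact SetLike.coe_injective this

theorem stmt8 (G : Type*) [Group G] [Finite G] (p n : ℕ) (hp : p.Prime) (hn : 2 ≤ n)
    (hcard : Nat.card G = p ^ n) (hd : DenseCD G) :
    Nat.card (Subgroup.center G) = p ∧ mStar G = p ^ (n + 1) := by
  have hfact : Fact p.Prime := ⟨hp⟩
  have hpg : IsPGroup p G := IsPGroup.of_card hcard
  have hp1 : 1 < p := hp.one_lt
  have hG1 : 1 < Nat.card G := by
    rw [hcard]; exact Nat.one_lt_pow (by omega) hp1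
  have hntG : Nontrivial G := Finite.one_lt_card_iff_nontrivial.mp hG1
  obtain ⟨K, hK⟩ := Sylow.exists_subgroup_card_pow_prime (G := G) p
    (n := 2) (by rw [hcard]; exact pow_dvd_pow p hn)
  obtain ⟨L, hLK, hL⟩ := Sylow.exists_subgroup_le_card_pow_prime_of_le_card hp hpg
    (H := K) (n := 1) (by rw [hK, pow_one]; nlinarith)
  rw [pow_one] at hL
  have hp2 : p < p ^ 2 := by nlinarith
  have hbotK : (⊥ : Subgroup G) < K := by
    rw [bot_lt_iff_ne_bot]
    intro h; rw [h, Subgroup.card_bot] at hK; nlinarith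
  have hbotL : (⊥ : Subgroup G) < L := by
    rw [bot_lt_iff_ne_bot]
    intro h; rw [h, Subgroup.card_bot] at hL; omega
  have hLKlt : L < K := lt_of_le_of_ne hLK (by
    intro h; rw [h, hK] at hL; omega)
  obtain ⟨X, hX, hbotX, hXK⟩ := hd ⊥ K hbotK ⟨L, hbotL, hLKlt⟩
  have hXdvd : Nat.card X ∣ p ^ 2 := hK ▸ Subgroup.card_dvd_of_le hXK.le
  have hX1 : 1 < Nat.card X :=
    (Subgroup.one_lt_card_iff_ne_bot X).mpr (bot_lt_iff_ne_bot.mp hbotX)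
  have hXlt : Nat.card X < p ^ 2 := by
    by_contra h
    push_neg at h
    exact hXK.ne (sub_eq_of_le_of_card_le hXK.le (by omega))
  obtain ⟨j, hj2, hXcard⟩ := (Nat.dvd_prime_pow hp).mp hXdvd
  have hXp : Nat.card X = p := by
    interval_cases j
    · rw [hXcard, pow_zero] at hX1; omega
    · rw [hXcard, pow_one]
    · rw [hXcard] at hXlt; omega
  have hbdd : BddAbove (Set.range (mCD G)) := (Set.finite_range _).bddAbove
  have hupper : mStar G ≤ p ^ (n + 1) := by
    rw [← hX]
    unfold mCD
    rw [hXp]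
    calc p * Nat.card (Subgroup.centralizer (X : Set G)) ≤ p * Nat.card G :=
          Nat.mul_le_mul_left _ (Subgroup.card_le_card_group (Subgroup.centralizer (X : Set G)))
      _ = p ^ (n + 1) := by rw [hcard]; ring
  have hcent : Subgroup.centralizer ((Subgroup.center G : Subgroup G) : Set G) = ⊤ := by
    ext x
    simp only [Subgroup.mem_centralizer_iff, Subgroup.mem_top, iff_true]
    intro g hg
    exact (Subgroup.mem_center_iff.mp hg x).symm
  have hZmCD : mCD G (Subgroup.center G) = Nat.card (Subgroup.center G) * p ^ n := by
    unfold mCD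
    rw [hcent, ← hcard]
    congr 1
    exact Nat.card_congr Subgroup.topEquiv.toEquiv
  have hlower : Nat.card (Subgroup.center G) * p ^ n ≤ mStar G := by
    rw [← hZmCD]; exact le_csSup hbdd ⟨_, rfl⟩
  have hZnt : Nontrivial (Subgroup.center G) := hpg.center_nontrivial
  have hZ1 : 1 < Nat.card (Subgroup.center G) := Finite.one_lt_card_iff_nontrivial.mpr hZnt
  have hpn0 : 0 < p ^ n := Nat.pow_pos (by omega)
  have hZle : Nat.card (Subgroup.center G) ≤ p := by
    have h1 : Nat.card (Subgroup.center G) * p ^ n ≤ p * p ^ n := by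
      calc Nat.card (Subgroup.center G) * p ^ n ≤ p ^ (n + 1) := hlower.trans hupper
        _ = p * p ^ n := by ring
    exact Nat.le_of_mul_le_mul_right h1 hpn0
  have htop : Nat.card (⊤ : Subgroup G) = Nat.card G := Nat.card_congr Subgroup.topEquiv.toEquiv
  have hZdvd : Nat.card (Subgroup.center G) ∣ p ^ n := by
    rw [← hcard, ← htop]; exact Subgroup.card_dvd_of_le le_top
  obtain ⟨k, hk, hZc⟩ := (Nat.dvd_prime_pow hp).mp hZdvd
  have hZp : Nat.card (Subgroup.center G) = p := by
    rcases k with _ | k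
    · rw [hZc] at hZ1; simp at hZ1
    · rcases k with _ | k
      · rw [hZc, pow_one]
      · exfalso
        rw [hZc] at hZle
        have : p * p ≤ p ^ (k + 1 + 1) := by
          calc p * p = p ^ 2 := by ring
            _ ≤ p ^ (k + 1 + 1) := Nat.pow_le_pow_right (by omega) (by omega)
        nlinarith
  refine ⟨hZp, le_antisymm hupper ?_⟩
  calc p ^ (n + 1) = p * p ^ n := by ring
    _ = Nat.card (Subgroup.center G) * p ^ n := by rw [hZp]
    _ ≤ mStar G := hlower
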